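/- arXiv:1111.5854 — 5 statements merged into one kernel-verified Lean document; each statement's English description precedes it below -/
import Mathlib

section
/- For every partial order (ℙ,≤) and every p ∈ ℙ, the map Ψ : V → V(p) given by Ψ(a) = â(p) is a well-defined monomorphism from (V,∈) into (V(p), ⊩_p ∈): (1) â(p) ∈ V(p) for every set a; (2) Ψ is injective, i.e. a ≠ b implies â(p) ≠ b̂(p); (3) b ∈ a if and only if b̂(p) ∈ â(p)(p), i.e. iff ⊩_p b̂(p) ∈ â(p). -/
set_option linter.unusedVariables false

noncomputable section

/-- Names for the cumulative hierarchy of variable sets over a partial order `P`: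
a name based at `p` assigns to every `q` a family of names (intended to be based at `q`). -/
inductive VName (P : Type) : Type 1
  | mk (base : P) (ι : P → Type) (el : ∀ q : P, ι q → VName P)

namespace VName

variable {P : Type}

/-- The base node of a name. -/
def base : VName P → P
  | mk p _ _ => p

/-- Restriction `f ↾ [r)` of a name to the cone above `r`. -/
def restrictN [Preorder P] : VName P → P → VName P
  | mk _ ι el, r => mk r (fun q => ι q × PLift (r ≤ q)) (fun q x => el q x.1)

/-- Extensional (hereditary) equality of names: this is the equality of the variable
sets (set valued functions on `[p)`) that the names denote. -/
def Equiv : VName P → VName P → Prop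
  | mk p ι el, mk p' ι' el' =>
      p = p' ∧ ∀ q : P, (∀ i : ι q, ∃ j : ι' q, Equiv (el q i) (el' q j)) ∧
        (∀ j : ι' q, ∃ i : ι q, Equiv (el q i) (el' q j))

theorem Equiv.refl : ∀ a : VName P, Equiv a a
  | mk _ ι el => ⟨rfl, fun q => ⟨fun i => ⟨i, Equiv.refl (el q i)⟩,
      fun j => ⟨j, Equiv.refl (el q j)⟩⟩⟩

theorem Equiv.symm : ∀ {a b : VName P}, Equiv a b → Equiv b a
  | mk _ _ el, mk _ _ el', ⟨hp, h⟩ =>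
      ⟨hp.symm, fun q =>
        ⟨fun j => let ⟨i, hi⟩ := (h q).2 j; ⟨i, Equiv.symm hi⟩,
         fun i => let ⟨j, hj⟩ := (h q).1 i; ⟨j, Equiv.symm hj⟩⟩⟩

theorem Equiv.trans : ∀ {a b c : VName P}, Equiv a b → Equiv b c → Equiv a c
  | mk _ _ el, mk _ _ el', mk _ _ el'', ⟨hp, h⟩, ⟨hp', h'⟩ =>
      ⟨hp.trans hp', fun q =>
        ⟨fun i => let ⟨j, hj⟩ := (h q).1 i; let ⟨k, hk⟩ := (h' q).1 j; ⟨k, Equiv.trans hj hk⟩,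
         fun k => let ⟨j, hj⟩ := (h' q).2 k; let ⟨i, hi⟩ := (h q).2 j; ⟨i, Equiv.trans hi hj⟩⟩⟩

instance setoid (P : Type) : Setoid (VName P) :=
  ⟨Equiv, Equiv.refl, Equiv.symm, Equiv.trans⟩

end VName

/-- Variable sets over `P`: names modulo extensional equality. -/
abbrev VSet (P : Type) : Type 1 := Quotient (VName.setoid P)

namespace VSet

variable {P : Type}

/-- The base node. -/
def base : VSet P → P :=
  Quotient.lift VName.base (fun a b h => by cases a; cases b; exact h.1)

/-- The value of a name at a node, as a set of variable sets. -/
def elemsN : VName P → P → Set (VSet P)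
  | .mk _ ι el, q => Set.range fun i : ι q => (⟦el q i⟧ : VSet P)

theorem elemsN_congr : ∀ {a b : VName P}, VName.Equiv a b → elemsN a = elemsN b
  | .mk _ ι el, .mk _ ι' el', ⟨_, h⟩ => by
      funext q
      ext x
      constructor
      · rintro ⟨i, rfl⟩
        obtain ⟨j, hj⟩ := (h q).1 i
        exact ⟨j, (Quotient.sound hj).symm⟩
      · rintro ⟨j, rfl⟩
        obtain ⟨i, hi⟩ := (h q).2 j
        exact ⟨i, Quotient.sound hi⟩

/-- `f.elems q` is the value `f(q)` of the variable set `f` at the node `q`. -/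
def elems : VSet P → P → Set (VSet P) :=
  Quotient.lift elemsN fun _ _ h => elemsN_congr h

theorem restrictN_congr [Preorder P] (r : P) :
    ∀ {a b : VName P}, VName.Equiv a b → VName.Equiv (a.restrictN r) (b.restrictN r)
  | .mk _ _ el, .mk _ _ el', ⟨_, h⟩ =>
      ⟨rfl, fun q =>
        ⟨fun i => let ⟨j, hj⟩ := (h q).1 i.1; ⟨⟨j, i.2⟩, hj⟩,
         fun j => let ⟨i, hi⟩ := (h q).2 j.1; ⟨⟨i, j.2⟩, hi⟩⟩⟩

/-- Restriction `f ↾ [r)`. -/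
def restrict [Preorder P] (f : VSet P) (r : P) : VSet P :=
  Quotient.lift (fun a : VName P => (⟦a.restrictN r⟧ : VSet P))
    (fun _ _ h => Quotient.sound (restrictN_congr r h)) f

end VSet

namespace VName

variable {P : Type}

/-- A name is *good* if it denotes an element of the cumulative hierarchy of variable
sets: its value at each `q` consists of good names based at `q`, it has empty value
outside of the cone of its base, and it is coherent under restrictions
(`g ∈ f(q)` and `q ≤ r` imply `g ↾ [r) ∈ f(r)`). -/
def GoodN [Preorder P] : VName P → Prop
  | .mk p ι el =>
      (∀ q : P, Nonempty (ι q) → p ≤ q) ∧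
      (∀ (q : P) (i : ι q), (el q i).base = q ∧ GoodN (el q i)) ∧
      (∀ (q : P) (i : ι q) (r : P), q ≤ r →
        ∃ j : ι r, VName.Equiv ((el q i).restrictN r) (el r j))

end VName

/-- `Vp p` is the universe `V(p) = ⋃_α V_α(p)` of variable sets at the node `p`. -/
def Vp {P : Type} [Preorder P] (p : P) : Set (VSet P) :=
  {f | ∃ a : VName P, VName.GoodN a ∧ a.base = p ∧ ⟦a⟧ = f}

/-- Membership forced at `p`: `⊩ₚ a ∈ f` iff `a ∈ f(p)`. -/
def memAt {P : Type} [Preorder P] (p : P) (a f : VSet P) : Prop := a ∈ f.elems p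

namespace VSet

variable {P : Type}

/-- Internal unordered pair `{a, b}` based at `q` (name level). -/
def upairN [Preorder P] (q : P) (a b : VName P) : VName P :=
  .mk q (fun r => Bool × PLift (q ≤ r))
    (fun r x => if x.1 then a.restrictN r else b.restrictN r)

/-- Internal (Kuratowski) ordered pair `(a, b)` based at `q` (name level);
its value at `r` is `{{a}↾[r), {a,b}↾[r)}`. -/
def pairN [Preorder P] (q : P) (a b : VName P) : VName P :=
  .mk q (fun r => Bool × PLift (q ≤ r))
    (fun r x => if x.1 then (upairN q a a).restrictN r else (upairN q a b).restrictN r)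

/-- Internal ordered pair `(a, b)` based at `q`. -/
def pairV [Preorder P] (q : P) (a b : VSet P) : VSet P := ⟦pairN q a.out b.out⟧

/-- Internal cartesian product (name level): `(f × g)(r) = {(a,b) : a ∈ f(r), b ∈ g(r)}`. -/
def prodN [Preorder P] (q : P) : VName P → VName P → VName P
  | .mk _ ι el, .mk _ ι' el' =>
      .mk q (fun r => (ι r × ι' r) × PLift (q ≤ r))
        (fun r x => pairN r (el r x.1.1) (el' r x.1.2))

/-- Internal cartesian product `A × B` based at `q`. -/
def prodV [Preorder P] (q : P) (A B : VSet P) : VSet P := ⟦prodN q A.out B.out⟧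

/-- Internal successor (name level): `Suc(f)(q) = {f↾[q)} ∪ f(q)`. -/
def sucN [Preorder P] : VName P → VName P
  | .mk p ι el =>
      .mk p (fun q => ι q ⊕ PLift (p ≤ q))
        (fun q x => Sum.elim (el q) (fun _ => (VName.mk p ι el).restrictN q) x)

/-- Internal successor `Suc(f)`. -/
def sucV [Preorder P] (f : VSet P) : VSet P := ⟦sucN f.out⟧

/-- The name `â(p)` of an external set (given by a `PSet`): `â(p)(q) = {b̂(q) : b ∈ a}`. -/
def hatN [Preorder P] : PSet → P → VName P
  | ⟨_, A⟩, p => .mk p (fun q => _ × PLift (p ≤ q)) (fun q x => hatN (A x.1) q)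

/-- The variable set `â(p)` associated to an external set `a`. -/
def hatV [Preorder P] (a : ZFSet) (p : P) : VSet P := ⟦hatN a.out p⟧

end VSet

/-- The von Neumann natural `n` as a `ZFSet`. -/
def natToZF : ℕ → ZFSet
  | 0 => ∅
  | n + 1 => insert (natToZF n) (natToZF n)


/-- First-order formulas of set theory (with de Bruijn variables `Fin n`), together
with an ordered-pair atom `isPair i j k` ("xᵢ = (xⱼ, xₖ)") and a pair-membership atom
`pairMem i j k` ("(xᵢ, xⱼ) ∈ xₖ"). -/
inductive SetFml : ℕ → Type
  | mem {n} (i j : Fin n) : SetFml n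
  | eq {n} (i j : Fin n) : SetFml n
  | isPair {n} (i j k : Fin n) : SetFml n
  | pairMem {n} (i j k : Fin n) : SetFml n
  | and {n} (f g : SetFml n) : SetFml n
  | or {n} (f g : SetFml n) : SetFml n
  | imp {n} (f g : SetFml n) : SetFml n
  | not {n} (f : SetFml n) : SetFml n
  | ex {n} (f : SetFml (n + 1)) : SetFml n
  | all {n} (f : SetFml (n + 1)) : SetFml n

namespace SetFml

/-- Biconditional. -/
def iff {n} (f g : SetFml n) : SetFml n := .and (.imp f g) (.imp g f)

/-- Relabelling of free variables (weakening/substitution of variables). -/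
def relabel : ∀ {n m : ℕ}, (Fin n → Fin m) → SetFml n → SetFml m
  | _, _, g, .mem i j => .mem (g i) (g j)
  | _, _, g, .eq i j => .eq (g i) (g j)
  | _, _, g, .isPair i j k => .isPair (g i) (g j) (g k)
  | _, _, g, .pairMem i j k => .pairMem (g i) (g j) (g k)
  | _, _, g, .and f₁ f₂ => .and (relabel g f₁) (relabel g f₂)
  | _, _, g, .or f₁ f₂ => .or (relabel g f₁) (relabel g f₂)
  | _, _, g, .imp f₁ f₂ => .imp (relabel g f₁) (relabel g f₂)
  | _, _, g, .not f => .not (relabel g f)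
  | _, _, g, .ex f => .ex (relabel (Fin.cases 0 fun i => (g i).succ) f)
  | _, _, g, .all f => .all (relabel (Fin.cases 0 fun i => (g i).succ) f)

/-- Universal closure of a formula. -/
def closeAll : ∀ {n : ℕ}, SetFml n → SetFml 0
  | 0, f => f
  | _ + 1, f => closeAll (.all f)

/-- Classical realization of a set-theoretic formula in a structure `(M, E)`. -/
def RealizeIn {M : Type*} (E : M → M → Prop) : ∀ {n}, SetFml n → (Fin n → M) → Prop
  | _, .mem i j, v => E (v i) (v j)
  | _, .eq i j, v => v i = v j
  | _, .isPair i j k, v =>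
      ∀ u, E u (v i) ↔ ((∀ t, E t u ↔ t = v j) ∨ (∀ t, E t u ↔ (t = v j ∨ t = v k)))
  | _, .pairMem i j k, v =>
      ∃ w, E w (v k) ∧
        ∀ u, E u w ↔ ((∀ t, E t u ↔ t = v i) ∨ (∀ t, E t u ↔ (t = v i ∨ t = v j)))
  | _, .and f g, v => RealizeIn E f v ∧ RealizeIn E g v
  | _, .or f g, v => RealizeIn E f v ∨ RealizeIn E g v
  | _, .imp f g, v => RealizeIn E f v → RealizeIn E g v
  | _, .not f, v => ¬ RealizeIn E f v
  | _, .ex f, v => ∃ a, RealizeIn E f (Fin.cons a v)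
  | _, .all f, v => ∀ a, RealizeIn E f (Fin.cons a v)

end SetFml

/-- The sheaf forcing relation `⊩ₚ φ[σ₁,…,σₙ]` over the topology of hereditary
(upward closed) subsets of `P`: since `[p)` is the least open neighbourhood of `p`,
`¬`, `→`, `∀` are evaluated over all `q ≥ p`, and `∃` is witnessed in `V(p)`. -/
def Forces {P : Type} [Preorder P] : ∀ {n : ℕ}, P → SetFml n → (Fin n → VSet P) → Prop
  | _, p, .mem i j, s => s i ∈ (s j).elems p
  | _, p, .eq i j, s => s i = s j
  | _, p, .isPair i j k, s => s i = VSet.pairV p (s j) (s k)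
  | _, p, .pairMem i j k, s => VSet.pairV p (s i) (s j) ∈ (s k).elems p
  | _, p, .and f g, s => Forces p f s ∧ Forces p g s
  | _, p, .or f g, s => Forces p f s ∨ Forces p g s
  | _, p, .imp f g, s => ∀ q : P, p ≤ q →
      Forces q f (fun i => (s i).restrict q) → Forces q g (fun i => (s i).restrict q)
  | _, p, .not f, s => ∀ q : P, p ≤ q → ¬ Forces q f (fun i => (s i).restrict q)
  | _, p, .ex f, s => ∃ σ ∈ Vp p, Forces p f (Fin.cons σ s)
  | _, p, .all f, s => ∀ q : P, p ≤ q → ∀ σ ∈ Vp q,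
      Forces q f (Fin.cons σ fun i => (s i).restrict q)


namespace SetFml

/-- `xᵢ ⊆ xⱼ`. -/
def fSub {n} (i j : Fin n) : SetFml n := .all (.imp (.mem 0 i.succ) (.mem 0 j.succ))

/-- "`x_f` is a set of ordered pairs and is single valued" (`f` is a function). -/
def fIsFunction {n} (f : Fin n) : SetFml n :=
  .and (.all (.imp (.mem 0 f.succ) (.ex (.ex (.isPair 2 1 0)))))
    (.all (.all (.all (.imp
      (.and (.pairMem 2 1 f.succ.succ.succ) (.pairMem 2 0 f.succ.succ.succ)) (.eq 1 0)))))

/-- "`x_f` is defined on every element of `x_a`". -/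
def fTotal {n} (f a : Fin n) : SetFml n :=
  .all (.imp (.mem 0 a.succ) (.ex (.pairMem 1 0 f.succ.succ)))

/-- "`x_f` is onto `x_b`". -/
def fOnto {n} (f b : Fin n) : SetFml n :=
  .all (.imp (.mem 0 b.succ) (.ex (.pairMem 0 1 f.succ.succ)))

/-- "`x_f` is injective". -/
def fInjective {n} (f : Fin n) : SetFml n :=
  .all (.all (.all (.imp
    (.and (.pairMem 2 0 f.succ.succ.succ) (.pairMem 1 0 f.succ.succ.succ)) (.eq 2 1))))

/-- "`x_f` is a function from `x_a` to `x_b`". -/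
def fFuncFromTo {n} (f a b : Fin n) : SetFml n :=
  .and (.all (.imp (.mem 0 f.succ) (.ex (.ex (.and (.mem 1 a.succ.succ.succ)
      (.and (.mem 0 b.succ.succ.succ) (.isPair 2 1 0)))))))
    (.and (.all (.all (.all (.imp
        (.and (.pairMem 2 1 f.succ.succ.succ) (.pairMem 2 0 f.succ.succ.succ)) (.eq 1 0)))))
      (fTotal f a))

/-- "`x_f` is an injective function from `x_a` to `x_b`". -/
def fInjFromTo {n} (f a b : Fin n) : SetFml n := .and (fFuncFromTo f a b) (fInjective f)

/-- "`x_f` is a surjective function from `x_a` onto `x_b`". -/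
def fSurjFromTo {n} (f a b : Fin n) : SetFml n := .and (fFuncFromTo f a b) (fOnto f b)

/-- `|x_a| < |x_b|`: there is an injective function from `x_a` to `x_b` and
no surjective function from `x_a` onto `x_b`. -/
def fCardLt {n} (a b : Fin n) : SetFml n :=
  .and (.ex (fInjFromTo 0 a.succ b.succ)) (.not (.ex (fSurjFromTo 0 a.succ b.succ)))

/-- "`x_S` is an inductive set" (contains the empty set, closed under successor). -/
def fInductive {n} (S : Fin n) : SetFml n :=
  .and (.ex (.and (.mem 0 S.succ) (.all (.not (.mem 0 1)))))
    (.all (.imp (.mem 0 S.succ) (.ex (.and (.mem 0 S.succ.succ)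
      (.all (.iff (.mem 0 1) (.or (.mem 0 2) (.eq 0 2))))))))

/-- "`x_N` is the set of natural numbers" (the least inductive set). -/
def fIsNat {n} (N : Fin n) : SetFml n :=
  .and (fInductive N) (.all (.imp (fInductive 0) (fSub N.succ 0)))

/-- "`x_pw` is the power set of `x_x`". -/
def fIsPow {n} (pw x : Fin n) : SetFml n := .all (.iff (.mem 0 pw.succ) (fSub 0 x.succ))

/-- `¬CH`: there is a set `B` with `|ℕ| < |B| < |P(ℕ)|`. -/
def negCHFml : SetFml 0 :=
  .ex (.ex (.ex (.and (fIsNat 2)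
    (.and (fIsPow 1 2) (.and (fCardLt 2 0) (fCardLt 0 1))))))

/-! The axioms of `ZFC` as sentences (the axiom of foundation in its `¬¬` form and
the axiom of choice in the form `∀𝓕(∀x∀y φ → ¬¬ψ*)`). -/

/-- Axiom of existence of the empty set: `∃x∀y ¬(y ∈ x)`. -/
def existsEmptyAx : SetFml 0 := .ex (.all (.not (.mem 0 1)))

/-- Axiom of extensionality: `∀x∀y(∀z(z ∈ x ↔ z ∈ y) → x = y)`. -/
def extAx : SetFml 0 :=
  .all (.all (.imp (.all (.iff (.mem 0 2) (.mem 0 1))) (.eq 1 0)))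

/-- Axiom of pairing: `∀x∀y∃z∀w(w ∈ z ↔ (w = x ∨ w = y))`. -/
def pairAx : SetFml 0 :=
  .all (.all (.ex (.all (.iff (.mem 0 1) (.or (.eq 0 3) (.eq 0 2))))))

/-- Axiom of union: `∀𝓕∃A∀x(x ∈ A ↔ ∃Y(Y ∈ 𝓕 ∧ x ∈ Y))`. -/
def unionAx : SetFml 0 :=
  .all (.ex (.all (.iff (.mem 0 1) (.ex (.and (.mem 0 3) (.mem 1 0))))))

/-- Axiom of power set: `∀x∃y∀z(z ∈ y ↔ ∀w(w ∈ z → w ∈ x))`. -/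
def powAx : SetFml 0 :=
  .all (.ex (.all (.iff (.mem 0 1) (.all (.imp (.mem 0 1) (.mem 0 3))))))

/-- Axiom of infinity: there exists an inductive set. -/
def infAx : SetFml 0 :=
  .ex (.and (.ex (.and (.mem 0 1) (.all (.not (.mem 0 1)))))
    (.all (.imp (.mem 0 1) (.ex (.and (.mem 0 2)
      (.all (.iff (.mem 0 1) (.or (.mem 0 2) (.eq 0 2)))))))))

/-- The matrix `x ∈ y ↔ (x ∈ z ∧ φ(x,z,w₁,…,wₙ))` of the comprehension axiom, in the
context `0 = x, 1 = y, 2 = z, 3+i = wᵢ`. -/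
def compInner {n} (φ : SetFml (n + 2)) : SetFml (n + 3) :=
  .iff (.mem 0 1) (.and (.mem 0 2)
    (φ.relabel (Fin.cases 0 (Fin.cases 2 fun j => j.succ.succ.succ))))

/-- The comprehension axiom for `φ(x,z,w₁,…,wₙ)` (free variables `0 = x, 1 = z,
2+i = wᵢ`): `∀z∀w₁…∀wₙ∃y∀x(x ∈ y ↔ (x ∈ z ∧ φ))`. -/
def compAx {n} (φ : SetFml (n + 2)) : SetFml 0 :=
  closeAll (.ex (.all (compInner φ)))

/-- `∀x(x ∈ A → ∃!y φ(x,y,A,w₁,…,wₙ))`, in the context `0 = A, 1+i = wᵢ`;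
`φ` has free variables `0 = x, 1 = y, 2 = A, 3+i = wᵢ`. -/
def replHyp {n} (φ : SetFml (n + 3)) : SetFml (n + 1) :=
  .all (.imp (.mem 0 1) (.ex (.and
    (φ.relabel (Fin.cases 1 (Fin.cases 0 (Fin.cases 2 fun j => j.succ.succ.succ))))
    (.all (.imp
      (φ.relabel (Fin.cases 2 (Fin.cases 0 (Fin.cases 3 fun j => j.succ.succ.succ.succ))))
      (.eq 0 1))))))

/-- `∃Y∀x(x ∈ A → ∃y(y ∈ Y ∧ φ(x,y,A,w⃗)))`, in the context `0 = A, 1+i = wᵢ`. -/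
def replConcl {n} (φ : SetFml (n + 3)) : SetFml (n + 1) :=
  .ex (.all (.imp (.mem 0 2) (.ex (.and (.mem 0 2)
    (φ.relabel (Fin.cases 1 (Fin.cases 0 (Fin.cases 3 fun j => j.succ.succ.succ.succ))))))))

/-- The replacement axiom for `φ(x,y,A,w₁,…,wₙ)`. -/
def replAx {n} (φ : SetFml (n + 3)) : SetFml 0 :=
  closeAll (.imp (replHyp φ) (replConcl φ))

/-- The axiom of foundation, in the (classically equivalent) `¬¬` form:
`¬∃x ¬(∃y(y ∈ x) → ∃y(y ∈ x ∧ ¬∃z(z ∈ x ∧ z ∈ y)))`. -/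
def foundAx : SetFml 0 :=
  .not (.ex (.not (.imp (.ex (.mem 0 1))
    (.ex (.and (.mem 0 1) (.not (.ex (.and (.mem 0 2) (.mem 0 1)))))))))

/-- `φ := (x ∈ 𝓕 ∧ y ∈ 𝓕 → ((∃z(z ∈ x ∧ z ∈ y) → x = y) ∧ ∃z(z ∈ x)))`,
in the context `0 = y, 1 = x, 2 = 𝓕`. -/
def acPhi : SetFml 3 :=
  .imp (.and (.mem 1 2) (.mem 0 2))
    (.and (.imp (.ex (.and (.mem 0 2) (.mem 0 1))) (.eq 1 0)) (.ex (.mem 0 2)))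

/-- `ψ* := ∃E(x ∈ 𝓕 → ∃a(a ∈ E ∧ a ∈ x ∧ ∀b(b ∈ E ∧ b ∈ x → ¬¬(b = a))))`,
in the context `0 = y, 1 = x, 2 = 𝓕`. -/
def acPsiStar : SetFml 3 :=
  .ex (.imp (.mem 2 3) (.ex (.and (.mem 0 1) (.and (.mem 0 3)
    (.all (.imp (.and (.mem 0 2) (.mem 0 4)) (.not (.not (.eq 0 1)))))))))

/-- The axiom of choice in the form `∀𝓕∀x∀y(φ → ¬¬ψ*)`. -/
def acAx : SetFml 0 := .all (.all (.all (.imp acPhi (.not (.not acPsiStar)))))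

end SetFml


namespace VSet

variable {P : Type} [Preorder P]

theorem hatN_base' (a : PSet) (p : P) : (hatN a p).base = p := by
  cases a; rfl

theorem hatN_restrict : ∀ (a : PSet) (p r : P), p ≤ r →
    VName.Equiv ((hatN a p).restrictN r) (hatN a r)
  | ⟨α, A⟩, p, r, h =>
    ⟨rfl, fun q =>
      ⟨fun i => ⟨⟨i.1.1, i.2⟩, VName.Equiv.refl _⟩,
       fun j => ⟨⟨⟨j.1, ⟨h.trans j.2.down⟩⟩, j.2⟩, VName.Equiv.refl _⟩⟩⟩

theorem hatN_congr : ∀ {x y : PSet}, PSet.Equiv x y → ∀ p : P,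
    VName.Equiv (hatN x p) (hatN y p)
  | ⟨α, A⟩, ⟨β, B⟩, h, p =>
    ⟨rfl, fun q =>
      ⟨fun i => let ⟨b, hb⟩ := h.1 i.1; ⟨⟨b, i.2⟩, hatN_congr hb q⟩,
       fun j => let ⟨a, ha⟩ := h.2 j.1; ⟨⟨a, j.2⟩, hatN_congr ha q⟩⟩⟩

theorem hatN_inj : ∀ {x y : PSet} {p : P}, VName.Equiv (hatN x p) (hatN y p) →
    PSet.Equiv x y
  | ⟨α, A⟩, ⟨β, B⟩, p, ⟨_, h⟩ =>
    ⟨fun a => let ⟨j, hj⟩ := (h p).1 ⟨a, ⟨le_refl p⟩⟩; ⟨j.1, hatN_inj hj⟩,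
     fun b => let ⟨i, hi⟩ := (h p).2 ⟨b, ⟨le_refl p⟩⟩; ⟨i.1, hatN_inj hi⟩⟩

theorem hatN_good : ∀ (a : PSet) (p : P), VName.GoodN (hatN a p)
  | ⟨α, A⟩, p =>
    ⟨fun q hq => hq.elim fun i => i.2.down,
     fun q i => ⟨hatN_base' _ _, hatN_good (A i.1) q⟩,
     fun q i r hr => ⟨⟨i.1, ⟨i.2.down.trans hr⟩⟩, hatN_restrict (A i.1) q r hr⟩⟩

theorem mem_hatN_iff : ∀ (a : PSet) (b : PSet) (p : P),
    b ∈ a ↔ (⟦hatN b p⟧ : VSet P) ∈ elemsN (hatN a p) p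
  | ⟨α, A⟩, b, p => by
    constructor
    · rintro ⟨i, hi⟩
      exact ⟨⟨i, ⟨le_refl p⟩⟩, (Quotient.sound (hatN_congr hi p)).symm⟩
    · rintro ⟨x, hx⟩
      exact ⟨x.1, (hatN_inj (Quotient.exact hx)).symm⟩

end VSet

/-- The map `Ψ : V → V(p)`, `Ψ(a) = â(p)`, is a well-defined monomorphism from
`(V, ∈)` into `(V(p), ⊩ₚ ∈)`:  (1) `â(p) ∈ V(p)`;  (2) `Ψ` is injective;
(3) `b ∈ a` iff `b̂(p) ∈ â(p)(p)`, i.e. iff `⊩ₚ b̂(p) ∈ â(p)`. -/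
theorem hat_is_monomorphism {P : Type} [PartialOrder P] (p : P) :
    (∀ a : ZFSet, VSet.hatV a p ∈ Vp p) ∧
    (∀ a b : ZFSet, a ≠ b → VSet.hatV a p ≠ VSet.hatV b p) ∧
    (∀ a b : ZFSet, b ∈ a ↔ VSet.hatV b p ∈ VSet.elems (VSet.hatV a p) p) := by
  refine ⟨fun a => ⟨VSet.hatN a.out p, VSet.hatN_good _ _, VSet.hatN_base' _ _, rfl⟩,
    fun a b hab h => hab ?_, fun a b => ?_⟩
  · exact Quotient.out_equiv_out.mp (VSet.hatN_inj (Quotient.exact h))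
  · conv_lhs => rw [← ZFSet.mk_out a, ← ZFSet.mk_out b, ZFSet.mk_mem_iff]
    exact VSet.mem_hatN_iff a.out b.out p

end
end

section
/- (Axiom of Comprehension is forced) Let (ℙ,≤) be a partial order with the hereditary-subsets topology and φ(x,z,w₁,…,wₙ) a formula of set theory. For every p ∈ ℙ: ⊩_p ∀z ∀w₁…∀wₙ ∃y ∀x (x ∈ y ↔ (x ∈ z ∧ φ)). Explicitly, for z, w₁,…,wₙ ∈ V(p) the function y with domain [p) defined by y(q) = { x ∈ z(q) : ⊩_q φ(x) } belongs to V(p) and witnesses the axiom. -/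
set_option linter.unusedVariables false

noncomputable section

section Aux

variable {P : Type} [Preorder P]

lemma base_restrictN' (a : VName P) (q : P) : (a.restrictN q).base = q := by
  cases a; rfl

lemma restrictN_restrictN {q r : P} (h : q ≤ r) (a : VName P) :
    VName.Equiv ((a.restrictN q).restrictN r) (a.restrictN r) := by
  cases a with
  | mk p ι el =>
    exact ⟨rfl, fun s =>
      ⟨fun i => ⟨⟨i.1.1, i.2⟩, VName.Equiv.refl _⟩,
       fun j => ⟨⟨⟨j.1, ⟨h.trans j.2.down⟩⟩, j.2⟩, VName.Equiv.refl _⟩⟩⟩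

lemma goodN_restrictN {a : VName P} (ha : a.GoodN) (q : P) : (a.restrictN q).GoodN := by
  cases a with
  | mk p ι el =>
    simp only [VName.GoodN] at ha ⊢
    obtain ⟨h1, h2, h3⟩ := ha
    refine ⟨fun r ⟨⟨i, h⟩⟩ => h.down, fun r i => h2 r i.1, fun r i r' hrr' => ?_⟩
    obtain ⟨j, hj⟩ := h3 r i.1 r' hrr'
    exact ⟨⟨j, ⟨i.2.down.trans hrr'⟩⟩, hj⟩

lemma restrict_mk (a : VName P) (q : P) :
    VSet.restrict (⟦a⟧ : VSet P) q = ⟦a.restrictN q⟧ := rfl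

lemma elems_mk (p : P) (ι : P → Type) (el : ∀ q : P, ι q → VName P) (q : P) :
    VSet.elems ⟦VName.mk p ι el⟧ q = Set.range (fun i : ι q => (⟦el q i⟧ : VSet P)) := rfl

lemma mem_elems_mk {p : P} {ι : P → Type} {el : ∀ q : P, ι q → VName P} {q : P}
    {x : VSet P} : x ∈ VSet.elems ⟦VName.mk p ι el⟧ q ↔ ∃ i, (⟦el q i⟧ : VSet P) = x :=
  Iff.rfl

lemma Vp_restrict {f : VSet P} {p : P} (hf : f ∈ Vp p) (q : P) : f.restrict q ∈ Vp q := by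
  obtain ⟨a, ha, hb, rfl⟩ := hf
  exact ⟨a.restrictN q, goodN_restrictN ha q, base_restrictN' a q, rfl⟩

lemma restrict_restrict {q r : P} (h : q ≤ r) (f : VSet P) :
    (f.restrict q).restrict r = f.restrict r := by
  induction f using Quotient.inductionOn with
  | h a => exact Quotient.sound (restrictN_restrictN h a)

lemma elems_restrict {q r : P} (h : q ≤ r) (f : VSet P) :
    (f.restrict q).elems r = f.elems r := by
  induction f using Quotient.inductionOn with
  | h a =>
    cases a with
    | mk p ι el =>
      ext x
      constructor
      · rintro ⟨i, rfl⟩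
        exact ⟨i.1, rfl⟩
      · rintro ⟨i, rfl⟩
        exact ⟨⟨i, ⟨h⟩⟩, rfl⟩

lemma upairN_congr {q : P} {a a' b b' : VName P} (ha : VName.Equiv a a')
    (hb : VName.Equiv b b') :
    VName.Equiv (VSet.upairN q a b) (VSet.upairN q a' b') := by
  refine ⟨rfl, fun r => ⟨fun i => ⟨i, ?_⟩, fun j => ⟨j, ?_⟩⟩⟩
  · obtain ⟨c, hc⟩ := i
    cases c
    · exact VSet.restrictN_congr _ hb
    · exact VSet.restrictN_congr _ ha
  · obtain ⟨c, hc⟩ := j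
    cases c
    · exact VSet.restrictN_congr _ hb
    · exact VSet.restrictN_congr _ ha

lemma upairN_restrictN {p q : P} (h : p ≤ q) (a b : VName P) :
    VName.Equiv ((VSet.upairN p a b).restrictN q)
      (VSet.upairN q (a.restrictN q) (b.restrictN q)) := by
  refine ⟨rfl, fun r => ⟨fun i => ?_, fun j => ?_⟩⟩
  · obtain ⟨⟨c, hp⟩, hq⟩ := i
    refine ⟨⟨c, hq⟩, ?_⟩
    cases c
    · exact (restrictN_restrictN hq.down b).symm
    · exact (restrictN_restrictN hq.down a).symm
  · obtain ⟨c, hq⟩ := j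
    refine ⟨⟨⟨c, ⟨h.trans hq.down⟩⟩, hq⟩, ?_⟩
    cases c
    · exact (restrictN_restrictN hq.down b).symm
    · exact (restrictN_restrictN hq.down a).symm

lemma pairN_congr {q : P} {a a' b b' : VName P} (ha : VName.Equiv a a')
    (hb : VName.Equiv b b') :
    VName.Equiv (VSet.pairN q a b) (VSet.pairN q a' b') := by
  refine ⟨rfl, fun r => ⟨fun i => ⟨i, ?_⟩, fun j => ⟨j, ?_⟩⟩⟩
  · obtain ⟨c, hc⟩ := i
    cases c
    · exact VSet.restrictN_congr _ (upairN_congr ha hb)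
    · exact VSet.restrictN_congr _ (upairN_congr ha ha)
  · obtain ⟨c, hc⟩ := j
    cases c
    · exact VSet.restrictN_congr _ (upairN_congr ha hb)
    · exact VSet.restrictN_congr _ (upairN_congr ha ha)

lemma upairN_restrict_chain {p q r : P} (hpq : p ≤ q) (hqr : q ≤ r) (a b : VName P) :
    VName.Equiv ((VSet.upairN p a b).restrictN r)
      ((VSet.upairN q (a.restrictN q) (b.restrictN q)).restrictN r) :=
  ((upairN_restrictN (hpq.trans hqr) a b).trans
    ((upairN_congr (restrictN_restrictN hqr a).symm (restrictN_restrictN hqr b).symm).trans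
      (upairN_restrictN hqr (a.restrictN q) (b.restrictN q)).symm))

lemma pairN_restrictN {p q : P} (h : p ≤ q) (a b : VName P) :
    VName.Equiv ((VSet.pairN p a b).restrictN q)
      (VSet.pairN q (a.restrictN q) (b.restrictN q)) := by
  refine ⟨rfl, fun r => ⟨fun i => ?_, fun j => ?_⟩⟩
  · obtain ⟨⟨c, hp⟩, hq⟩ := i
    refine ⟨⟨c, hq⟩, ?_⟩
    cases c
    · exact upairN_restrict_chain h hq.down a b
    · exact upairN_restrict_chain h hq.down a a
  · obtain ⟨c, hq⟩ := j
    refine ⟨⟨⟨c, ⟨h.trans hq.down⟩⟩, hq⟩, ?_⟩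
    cases c
    · exact upairN_restrict_chain h hq.down a b
    · exact upairN_restrict_chain h hq.down a a

lemma out_equiv_restrictN (a : VSet P) (q : P) :
    VName.Equiv ((a.restrict q).out) (a.out.restrictN q) := by
  apply Quotient.exact (s := VName.setoid P)
  rw [Quotient.out_eq]
  conv_lhs => rw [← Quotient.out_eq a]
  rfl

lemma restrict_pairV {p q : P} (h : p ≤ q) (a b : VSet P) :
    (VSet.pairV p a b).restrict q = VSet.pairV q (a.restrict q) (b.restrict q) := by
  apply Quotient.sound
  exact (pairN_restrictN h a.out b.out).trans
    (pairN_congr (out_equiv_restrictN a q).symm (out_equiv_restrictN b q).symm)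

lemma mem_elems_good {p q : P} {f x : VSet P} (hf : f ∈ Vp p) (hx : x ∈ f.elems p)
    (hpq : p ≤ q) : x.restrict q ∈ f.elems q := by
  obtain ⟨a, ha, hb, rfl⟩ := hf
  cases a with
  | mk p' ι el =>
    simp only [VName.base] at hb
    subst hb
    simp only [VName.GoodN] at ha
    obtain ⟨i, rfl⟩ := mem_elems_mk.mp hx
    obtain ⟨j, hj⟩ := ha.2.2 p' i q hpq
    exact ⟨j, (Quotient.sound hj).symm⟩

lemma forces_mono : ∀ {m : ℕ} (ψ : SetFml m) {p q : P}, p ≤ q →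
    ∀ s : Fin m → VSet P, (∀ i, s i ∈ Vp p) → Forces p ψ s →
      Forces q ψ (fun i => (s i).restrict q) := by
  intro m ψ
  induction ψ with
  | mem i j =>
    intro p q hpq s hs h
    rw [show Forces q (.mem i j) (fun i => (s i).restrict q) =
      ((s i).restrict q ∈ ((s j).restrict q).elems q) from rfl, elems_restrict le_rfl]
    exact mem_elems_good (hs j) h hpq
  | eq i j =>
    intro p q hpq s hs h
    exact congrArg (·.restrict q) h
  | isPair i j k =>
    intro p q hpq s hs h
    show (s i).restrict q = VSet.pairV q ((s j).restrict q) ((s k).restrict q)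
    rw [show s i = _ from h, restrict_pairV hpq]
  | pairMem i j k =>
    intro p q hpq s hs h
    show VSet.pairV q ((s i).restrict q) ((s j).restrict q) ∈ ((s k).restrict q).elems q
    rw [elems_restrict le_rfl, ← restrict_pairV hpq]
    exact mem_elems_good (hs k) h hpq
  | and f g ihf ihg =>
    intro p q hpq s hs h
    exact ⟨ihf hpq s hs h.1, ihg hpq s hs h.2⟩
  | or f g ihf ihg =>
    intro p q hpq s hs h
    exact h.elim (fun h => Or.inl (ihf hpq s hs h)) (fun h => Or.inr (ihg hpq s hs h))
  | imp f g ihf ihg =>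
    intro p q hpq s hs h r hqr
    simp only [restrict_restrict hqr]
    exact h r (hpq.trans hqr)
  | not f ihf =>
    intro p q hpq s hs h r hqr
    simp only [restrict_restrict hqr]
    exact h r (hpq.trans hqr)
  | ex f ihf =>
    intro p q hpq s hs h
    obtain ⟨σ, hσ, hf⟩ := h
    refine ⟨σ.restrict q, Vp_restrict hσ q, ?_⟩
    have := ihf hpq (Fin.cons σ s) (fun k => Fin.cases hσ hs k) hf
    convert this using 1
    funext k
    refine Fin.cases ?_ (fun k => ?_) k <;> simp [Fin.cons_zero, Fin.cons_succ]
  | all f ihf =>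
    intro p q hpq s hs h r hqr
    simp only [restrict_restrict hqr]
    exact h r (hpq.trans hqr)

lemma forces_relabel : ∀ {m k : ℕ} (f : SetFml m) (g : Fin m → Fin k) (p : P)
    (s : Fin k → VSet P), Forces p (f.relabel g) s ↔ Forces p f (s ∘ g) := by
  intro m k f
  induction f generalizing k with
  | mem i j => intro g p s; exact Iff.rfl
  | eq i j => intro g p s; exact Iff.rfl
  | isPair i j k' => intro g p s; exact Iff.rfl
  | pairMem i j k' => intro g p s; exact Iff.rfl
  | and f g ihf ihg =>
    intro g' p s
    exact and_congr (ihf g' p s) (ihg g' p s)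
  | or f g ihf ihg =>
    intro g' p s
    exact or_congr (ihf g' p s) (ihg g' p s)
  | imp f g ihf ihg =>
    intro g' p s
    exact forall₂_congr fun q hq =>
      imp_congr (ihf g' q _) (ihg g' q _)
  | not f ihf =>
    intro g' p s
    exact forall₂_congr fun q hq => not_congr (ihf g' q _)
  | ex f ihf =>
    intro g' p s
    refine exists_congr fun σ => and_congr_right fun hσ => (ihf _ p _).trans ?_
    rw [show (Fin.cons σ s) ∘ (Fin.cases 0 fun i => (g' i).succ) = Fin.cons σ (s ∘ g')
      from funext fun k => Fin.cases (by simp) (fun k => by simp) k]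
  | all f ihf =>
    intro g' p s
    refine forall₂_congr fun q hq => forall₂_congr fun σ hσ => (ihf _ q _).trans ?_
    rw [show (Fin.cons σ fun i => (s i).restrict q) ∘ (Fin.cases 0 fun i => (g' i).succ)
        = Fin.cons σ (fun i => ((s ∘ g') i).restrict q)
      from funext fun k => Fin.cases (by simp) (fun k => by simp) k]

lemma forces_closeAll : ∀ {m : ℕ} (f : SetFml m) (p : P),
    (∀ q, p ≤ q → ∀ s : Fin m → VSet P, (∀ i, s i ∈ Vp q) → Forces q f s) →
      Forces p (SetFml.closeAll f) ![] := by
  intro m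
  induction m with
  | zero =>
    intro f p H
    exact H p le_rfl ![] (fun i => i.elim0)
  | succ m ih =>
    intro f p H
    show Forces p (SetFml.closeAll (.all f)) ![]
    refine ih (.all f) p fun q hpq s hs => ?_
    intro r hqr σ hσ
    exact H r (hpq.trans hqr) _ fun k =>
      Fin.cases hσ (fun k => Vp_restrict (hs k) r) k

end Aux

section Core

variable {P : Type} [Preorder P] {n : ℕ}

lemma comp_map_eval (x' y' z' : VSet P) (w' : Fin n → VSet P) :
    (Fin.cons x' (Fin.cons y' (Fin.cons z' w')) : Fin (n + 3) → VSet P) ∘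
        (Fin.cases 0 (Fin.cases 2 fun j => j.succ.succ.succ) : Fin (n + 2) → Fin (n + 3))
      = Fin.cons x' (Fin.cons z' w') := by
  funext k
  refine Fin.cases ?_ (fun k => Fin.cases ?_ (fun j => ?_) k) k
  · simp only [Function.comp_apply, Fin.cases_zero, Fin.cons_zero]
  · have h2 : (2 : Fin (n + 3)) = (0 : Fin (n + 1)).succ.succ := by
      ext; simp [Fin.val_succ]
    simp only [Function.comp_apply, Fin.cases_succ, Fin.cases_zero, Fin.cons_succ,
      Fin.cons_zero]
    rw [h2]
    simp only [Fin.cons_succ, Fin.cons_zero]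
  · simp only [Function.comp_apply, Fin.cases_succ, Fin.cons_succ]

lemma compCore (φ : SetFml (n + 2)) (p : P) (z : VSet P) (hz : z ∈ Vp p)
    (w : Fin n → VSet P) (hw : ∀ i, w i ∈ Vp p) :
    ∃ y ∈ Vp p,
      (∀ q : P, p ≤ q → VSet.elems y q =
        {x : VSet P | x ∈ VSet.elems z q ∧
          Forces q φ (Fin.cons x (Fin.cons (z.restrict q) fun i => (w i).restrict q))}) ∧
      Forces p (.all (SetFml.compInner φ)) (Fin.cons y (Fin.cons z w)) := by
  obtain ⟨a, ha, hb, rfl⟩ := hz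
  cases a with
  | mk p' ι el =>
    simp only [VName.base] at hb
    subst hb
    have haG := ha
    simp only [VName.GoodN] at ha
    obtain ⟨h1, h2, h3⟩ := ha
    set z : VSet P := (⟦VName.mk p' ι el⟧ : VSet P) with hzdef
    set v : ∀ q : P, VSet P → (Fin (n + 2) → VSet P) := fun q x =>
      Fin.cons x (Fin.cons (z.restrict q) fun i => (w i).restrict q) with hvdef
    set yN : VName P := VName.mk p'
      (fun q => {i : ι q // Forces q φ (v q ⟦el q i⟧)})
      (fun q i => el q i.1) with hyNdef
    have hyGood : yN.GoodN := by
      simp only [hyNdef, VName.GoodN]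
      refine ⟨fun q ⟨⟨i, _⟩⟩ => h1 q ⟨i⟩, fun q i => h2 q i.1, fun q i r hqr => ?_⟩
      obtain ⟨j, hj⟩ := h3 q i.1 r hqr
      have hparams : ∀ k, v q ⟦el q i.1⟧ k ∈ Vp q := by
        intro k
        refine Fin.cases ?_ (fun k => Fin.cases ?_ (fun k => ?_) k) k
        · exact ⟨el q i.1, (h2 q i.1).2, (h2 q i.1).1, rfl⟩
        · exact Vp_restrict ⟨VName.mk p' ι el, haG, rfl, rfl⟩ q
        · exact Vp_restrict (hw k) q
      have hm := forces_mono φ hqr _ hparams i.2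
      have heq : (fun k => (v q ⟦el q i.1⟧ k).restrict r) = v r ⟦el r j⟧ := by
        funext k
        refine Fin.cases ?_ (fun k => Fin.cases ?_ (fun k => ?_) k) k
        · simp only [hvdef, Fin.cons_zero, restrict_mk]
          exact Quotient.sound hj
        · simp only [hvdef, Fin.cons_zero, Fin.cons_succ]
          exact restrict_restrict hqr z
        · simp only [hvdef, Fin.cons_succ]
          exact restrict_restrict hqr (w k)
      rw [heq] at hm
      exact ⟨⟨j, hm⟩, hj⟩
    have hspec : ∀ q : P, VSet.elems ⟦yN⟧ q = {x : VSet P | x ∈ VSet.elems z q ∧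
        Forces q φ (v q x)} := by
      intro q
      ext x
      constructor
      · rintro ⟨i, rfl⟩
        exact ⟨⟨i.1, rfl⟩, i.2⟩
      · rintro ⟨⟨i, rfl⟩, hx⟩
        exact ⟨⟨i, hx⟩, rfl⟩
    refine ⟨⟦yN⟧, ⟨yN, hyGood, rfl, rfl⟩, fun q _ => hspec q, ?_⟩
    intro q hpq x hx
    set u : Fin (n + 3) → VSet P :=
      Fin.cons x (fun k => ((Fin.cons (⟦yN⟧ : VSet P)
        ((Fin.cons z w : Fin (n + 1) → VSet P)) : Fin (n + 2) → VSet P) k).restrict q)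
      with hudef
    show Forces q (SetFml.compInner φ) u
    have hu0 : u 0 = x := rfl
    have hu1 : u 1 = VSet.restrict (⟦yN⟧ : VSet P) q := by
      simp only [hudef, Fin.cons_succ, Fin.cons_zero]
      rfl
    have e2 : (2 : Fin (n + 3)) = (0 : Fin (n + 1)).succ.succ := by
      ext; simp [Fin.val_succ]
    have hcomp : ∀ r : P, q ≤ r →
        ((fun k => (u k).restrict r) ∘
          (Fin.cases 0 (Fin.cases 2 fun j => j.succ.succ.succ) : Fin (n+2) → Fin (n+3)))
          = v r (x.restrict r) := by
      intro r hqr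
      funext k
      refine Fin.cases ?_ (fun k => Fin.cases ?_ (fun k => ?_) k) k
      · simp only [Function.comp_apply, Fin.cases_zero, hudef, hvdef, Fin.cons_zero]
      · simp only [Function.comp_apply, Fin.cases_succ, Fin.cases_zero]
        rw [e2]
        simp only [hudef, hvdef, Fin.cons_succ, Fin.cons_zero]
        exact restrict_restrict hqr z
      · simp only [Function.comp_apply, Fin.cases_succ, hudef, hvdef, Fin.cons_succ]
        exact restrict_restrict hqr (w k)
    have hmem1 : ∀ r : P, q ≤ r →
        (((fun k => (u k).restrict r) 0 ∈ ((fun k => (u k).restrict r) 1).elems r) ↔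
          (x.restrict r ∈ VSet.elems ⟦yN⟧ r)) := by
      intro r hqr
      rw [show (fun k => (u k).restrict r) 1 = (VSet.restrict (⟦yN⟧ : VSet P) q).restrict r
        from congrArg (·.restrict r) hu1, restrict_restrict hqr, elems_restrict le_rfl]
      exact Iff.rfl
    have hmem2 : ∀ r : P, q ≤ r →
        (((fun k => (u k).restrict r) 0 ∈ ((fun k => (u k).restrict r) 2).elems r) ↔
          (x.restrict r ∈ VSet.elems z r)) := by
      intro r hqr
      have hu2 : u 2 = z.restrict q := by
        have e2 : (2 : Fin (n + 3)) = (0 : Fin (n + 1)).succ.succ := by ext; simp [Fin.val_succ]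
        simp only [hudef, e2, Fin.cons_succ, Fin.cons_zero]
      rw [show (fun k => (u k).restrict r) 2 = (u 2).restrict r from rfl, hu2,
        restrict_restrict hqr, elems_restrict le_rfl]
      exact Iff.rfl
    constructor
    · -- x ∈ y → x ∈ z ∧ φ
      intro r hqr hmem
      rw [show Forces r (SetFml.mem 0 1) (fun k => (u k).restrict r) =
        ((fun k => (u k).restrict r) 0 ∈ ((fun k => (u k).restrict r) 1).elems r)
        from rfl, hmem1 r hqr, hspec r] at hmem
      obtain ⟨hxz, hxφ⟩ := hmem
      constructor
      · rw [show Forces r (SetFml.mem 0 2) (fun k => (u k).restrict r) =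
          ((fun k => (u k).restrict r) 0 ∈ ((fun k => (u k).restrict r) 2).elems r)
          from rfl, hmem2 r hqr]
        exact hxz
      · rw [forces_relabel, hcomp r hqr]
        exact hxφ
    · -- x ∈ z ∧ φ → x ∈ y
      intro r hqr hand
      obtain ⟨hxz, hxφ⟩ := hand
      rw [show Forces r (SetFml.mem 0 2) (fun k => (u k).restrict r) =
        ((fun k => (u k).restrict r) 0 ∈ ((fun k => (u k).restrict r) 2).elems r)
        from rfl, hmem2 r hqr] at hxz
      rw [forces_relabel, hcomp r hqr] at hxφ
      rw [show Forces r (SetFml.mem 0 1) (fun k => (u k).restrict r) =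
        ((fun k => (u k).restrict r) 0 ∈ ((fun k => (u k).restrict r) 1).elems r)
        from rfl, hmem1 r hqr, hspec r]
      exact ⟨hxz, hxφ⟩

end Core

/-- **The axiom of comprehension is forced.**  For every formula `φ(x,z,w₁,…,wₙ)`
(free variables `0 = x`, `1 = z`, `2+i = wᵢ`) and every `p`:
`⊩ₚ ∀z∀w₁…∀wₙ∃y∀x(x ∈ y ↔ (x ∈ z ∧ φ))`.  Explicitly, for `z, w⃗ ∈ V(p)` the
variable set `y` with `y(q) = {x ∈ z(q) : ⊩_q φ(x)}` belongs to `V(p)` and witnesses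
the axiom. -/
theorem comprehension_forced {P : Type} [PartialOrder P] {n : ℕ}
    (φ : SetFml (n + 2)) (p : P) :
    Forces p (SetFml.compAx φ) ![] ∧
    (∀ z ∈ Vp p, ∀ w : Fin n → VSet P, (∀ i, w i ∈ Vp p) →
      ∃ y ∈ Vp p,
        (∀ q : P, p ≤ q → VSet.elems y q =
          {x : VSet P | x ∈ VSet.elems z q ∧
            Forces q φ (Fin.cons x (Fin.cons (z.restrict q) fun i => (w i).restrict q))}) ∧
        Forces p (.all (SetFml.compInner φ)) (Fin.cons y (Fin.cons z w))) := by
  constructor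
  · refine forces_closeAll _ p fun q hpq s hs => ?_
    obtain ⟨y, hy, hspec, hall⟩ := compCore φ q (s 0) (hs 0) (fun i => s i.succ)
      (fun i => hs i.succ)
    refine ⟨y, hy, ?_⟩
    rwa [show (Fin.cons (s 0) (fun i => s i.succ) : Fin (n + 1) → VSet P) = s
      from funext fun k => Fin.cases rfl (fun _ => rfl) k] at hall
  · exact fun z hz w hw => compCore φ p z hz w hw

end
end

section
/- (Axiom of Power Set is forced) Let (ℙ,≤) be a partial order with the hereditary-subsets topology. For every p ∈ ℙ: ⊩_p ∀x ∃y ∀z (z ∈ y ↔ ∀w(w ∈ z → w ∈ x)). Explicitly, for f ∈ V(p) the function g with domain [p) defined by g(q) = { h : [q) → ⋃_{r≥q} P(f(r)) | h(r) ⊆ f(r) for all r ≥ q, and i↾[t) ∈ h(t) whenever i ∈ h(r) and t ≥ r ≥ q } belongs to V(p) and satisfies ⊩_p ∀z (z ∈ g ↔ ∀w(w ∈ z → w ∈ f)). -/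
set_option linter.unusedVariables false

noncomputable section

namespace PowAux

variable {P : Type} [PartialOrder P]

theorem elems_restrict (x : VSet P) {q u : P} (h : q ≤ u) :
    (x.restrict q).elems u = x.elems u := by
  induction x using Quotient.ind
  rename_i a
  cases a with
  | mk p ι el =>
    ext y
    constructor
    · rintro ⟨i, rfl⟩
      exact ⟨i.1, rfl⟩
    · rintro ⟨i, rfl⟩
      exact ⟨⟨i, ⟨h⟩⟩, rfl⟩

theorem base_restrictN (a : VName P) (q : P) : (a.restrictN q).base = q := by
  cases a; rfl

theorem goodN_restrictN {a : VName P} (ha : a.GoodN) (q : P) : (a.restrictN q).GoodN := by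
  cases a with
  | mk p ι el =>
    obtain ⟨h1, h2, h3⟩ := ha
    refine ⟨fun t ht => ht.elim fun x => x.2.down, fun t i => h2 t i.1, fun t i u hu => ?_⟩
    obtain ⟨j, hj⟩ := h3 t i.1 u hu
    exact ⟨⟨j, ⟨le_trans i.2.down hu⟩⟩, hj⟩

theorem restrict_mem_Vp {x : VSet P} {p : P} (hx : x ∈ Vp p) (q : P) :
    x.restrict q ∈ Vp q := by
  obtain ⟨a, ha, hb, rfl⟩ := hx
  exact ⟨a.restrictN q, goodN_restrictN ha q, base_restrictN a q, rfl⟩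

theorem vp_restrict_self {x : VSet P} {p : P} (hx : x ∈ Vp p) : x.restrict p = x := by
  obtain ⟨a, ha, hb, rfl⟩ := hx
  cases a with
  | mk p' ι el =>
    have hb' : p' = p := hb
    subst hb'
    obtain ⟨h1, h2, h3⟩ := ha
    exact Quotient.sound ⟨rfl, fun t =>
      ⟨fun i => ⟨i.1, VName.Equiv.refl _⟩,
       fun i => ⟨⟨i, ⟨h1 t ⟨i⟩⟩⟩, VName.Equiv.refl _⟩⟩⟩

theorem mem_elems_vp {a : VName P} (ha : a.GoodN) {u : P} {y : VSet P}
    (hy : y ∈ VSet.elems ⟦a⟧ u) : y ∈ Vp u := by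
  cases a with
  | mk p ι el =>
    obtain ⟨h1, h2, h3⟩ := ha
    obtain ⟨i, rfl⟩ := hy
    exact ⟨el u i, (h2 u i).2, (h2 u i).1, rfl⟩

/-- The coherence condition on a family of subsets of the values of a name: such
families index the "internal subsets" of the name. -/
def SubOK (ι : P → Type) (el : ∀ q : P, ι q → VName P) (q : P)
    (A : ∀ t, ι t → Prop) : Prop :=
  (∀ t, (∃ i, A t i) → q ≤ t) ∧
  ∀ (t : P) (i : ι t), A t i → ∀ u, t ≤ u →
    ∃ j : ι u, A u j ∧ VName.Equiv ((el t i).restrictN u) (el u j)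

/-- The internal subset of a name determined by a coherent family `A`. -/
def subN (ι : P → Type) (el : ∀ q : P, ι q → VName P) (q : P)
    (A : ∀ t, ι t → Prop) : VName P :=
  .mk q (fun t => {i : ι t // A t i}) fun t i => el t i.1

/-- The internal power set of the name `mk _ ι el`, based at `p`. -/
def powN (ι : P → Type) (el : ∀ q : P, ι q → VName P) (p : P) : VName P :=
  .mk p (fun q => {A : ∀ t, ι t → Prop // SubOK ι el q A} × PLift (p ≤ q))
    fun q x => subN ι el q x.1.1

section Pow

variable {ι : P → Type} {el : ∀ q : P, ι q → VName P}

theorem subN_good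
    (h2 : ∀ (q : P) (i : ι q), (el q i).base = q ∧ (el q i).GoodN) {q : P} {A : ∀ t, ι t → Prop} (hA : SubOK ι el q A) :
    (subN ι el q A).GoodN := by
  refine ⟨fun t ht => hA.1 t (ht.elim fun i => ⟨i.1, i.2⟩),
    fun t i => h2 t i.1, fun t i u hu => ?_⟩
  obtain ⟨j, hj, he⟩ := hA.2 t i.1 i.2 u hu
  exact ⟨⟨j, hj⟩, he⟩

theorem powN_good
    (h2 : ∀ (q : P) (i : ι q), (el q i).base = q ∧ (el q i).GoodN)
    (h3 : ∀ (q : P) (i : ι q) (r : P), q ≤ r →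
      ∃ j : ι r, VName.Equiv ((el q i).restrictN r) (el r j)) (p : P) : (powN ι el p).GoodN := by
  refine ⟨fun q hq => hq.elim fun x => x.2.down,
    fun q x => ⟨rfl, subN_good h2 x.1.2⟩, ?_⟩
  rintro q ⟨⟨A, hA⟩, ⟨hpq⟩⟩ r hqr
  have hA' : SubOK ι el r (fun t i => A t i ∧ r ≤ t) := by
    refine ⟨fun t ht => ?_, fun t i hi u hu => ?_⟩
    · obtain ⟨i, hi⟩ := ht
      exact hi.2
    · obtain ⟨j, hj, he⟩ := hA.2 t i hi.1 u hu
      exact ⟨j, ⟨hj, hi.2.trans hu⟩, he⟩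
  refine ⟨⟨⟨_, hA'⟩, ⟨hpq.trans hqr⟩⟩, rfl, fun t => ?_⟩
  exact ⟨fun i => ⟨⟨i.1.1, i.1.2, i.2.down⟩, VName.Equiv.refl _⟩,
    fun j => ⟨⟨⟨j.1, j.2.1⟩, ⟨j.2.2⟩⟩, VName.Equiv.refl _⟩⟩

end Pow

/-- Main lemma: the internal power set of `f ∈ V(p)` exists in `V(p)`, has the right
values, and forces `∀z(z ∈ g ↔ ∀w(w ∈ z → w ∈ f))`. -/
theorem main (p : P) (f : VSet P) (hf : f ∈ Vp p) :
    ∃ g ∈ Vp p,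
      (∀ q : P, p ≤ q → VSet.elems g q =
        {h : VSet P | h ∈ Vp q ∧ ∀ r : P, q ≤ r → VSet.elems h r ⊆ VSet.elems f r}) ∧
      ∀ s : Fin 2 → VSet P, s 0 = g → s 1 = f →
        Forces p (.all (.iff (.mem 0 1) (.all (.imp (.mem 0 1) (.mem 0 3))))) s := by
  obtain ⟨a, hgood, hbase, rfl⟩ := hf
  cases a with
  | mk p' ι el =>
    have hb : p' = p := hbase
    subst hb
    obtain ⟨h1, h2, h3⟩ := hgood
    have hchar : ∀ q : P, p' ≤ q → VSet.elems ⟦powN ι el p'⟧ q =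
        {h : VSet P | h ∈ Vp q ∧ ∀ r : P, q ≤ r →
          VSet.elems h r ⊆ VSet.elems ⟦VName.mk p' ι el⟧ r} := by
      intro q hpq
      ext h
      constructor
      · rintro ⟨⟨⟨A, hA⟩, -⟩, rfl⟩
        refine ⟨⟨subN ι el q _, subN_good h2 hA, rfl, rfl⟩, fun r hr y hy => ?_⟩
        obtain ⟨i, rfl⟩ := hy
        exact ⟨i.1, rfl⟩
      · rintro ⟨⟨b, hbgood, hbbase, rfl⟩, hsub⟩
        cases b with
        | mk q' ι' el' =>
          have hq' : q' = q := hbbase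
          subst hq'
          obtain ⟨g1, g2, g3⟩ := hbgood
          have hA : SubOK ι el q'
              (fun t i => q' ≤ t ∧ ∃ j : ι' t, VName.Equiv (el t i) (el' t j)) := by
            refine ⟨fun t ht => ?_, ?_⟩
            · obtain ⟨i, hi⟩ := ht
              exact hi.1
            · rintro t i ⟨hqt, j, hij⟩ u htu
              obtain ⟨j', hj'⟩ := g3 t j u htu
              obtain ⟨i', hi'⟩ := hsub u (hqt.trans htu) ⟨j', rfl⟩
              have e : VName.Equiv (el u i') (el' u j') := Quotient.exact hi'
              exact ⟨i', ⟨hqt.trans htu, j', e⟩,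
                ((VSet.restrictN_congr u hij).trans hj').trans e.symm⟩
          have hEq : VName.Equiv
              (subN ι el q' (fun t i => q' ≤ t ∧ ∃ j : ι' t, VName.Equiv (el t i) (el' t j)))
              (VName.mk q' ι' el') := by
            refine ⟨rfl, fun t => ⟨?_, ?_⟩⟩
            · rintro ⟨i, hqt, j, hij⟩
              exact ⟨j, hij⟩
            · intro j
              have hqt : q' ≤ t := g1 t ⟨j⟩
              obtain ⟨i, hi⟩ := hsub t hqt ⟨j, rfl⟩
              have e : VName.Equiv (el t i) (el' t j) := Quotient.exact hi
              exact ⟨⟨i, hqt, j, e⟩, e⟩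
          exact ⟨(⟨_, hA⟩, ⟨hpq⟩), Quotient.sound hEq⟩
    refine ⟨⟦powN ι el p'⟧, ⟨powN ι el p', powN_good h2 h3 p', rfl, rfl⟩, hchar, ?_⟩
    intro s hs0 hs1 q hpq σ hσ
    refine ⟨?_, ?_⟩
    · -- z ∈ g → ∀w(w ∈ z → w ∈ f)
      intro r hqr hmem
      have hmem' : σ.restrict r ∈ VSet.elems ⟦powN ι el p'⟧ r := by
        have h0 : σ.restrict r ∈ (((s 0).restrict q).restrict r).elems r := hmem
        rwa [hs0, elems_restrict _ (le_refl r), elems_restrict _ hqr] at h0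
      rw [hchar r (hpq.trans hqr)] at hmem'
      obtain ⟨hσr, hsub⟩ := hmem'
      intro t hrt τ hτ u htu hm
      have hm' : τ.restrict u ∈ (σ.restrict r).elems u := by
        have h0 : τ.restrict u ∈ (((σ.restrict r).restrict t).restrict u).elems u := hm
        rwa [elems_restrict _ (le_refl u), elems_restrict _ htu] at h0
      have hin := hsub u (hrt.trans htu) hm'
      show τ.restrict u ∈
        (((((s 1).restrict q).restrict r).restrict t).restrict u).elems u
      rw [hs1, elems_restrict _ (le_refl u), elems_restrict _ htu,
        elems_restrict _ (hrt.trans htu), elems_restrict _ (hqr.trans (hrt.trans htu))]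
      exact hin
    · -- ∀w(w ∈ z → w ∈ f) → z ∈ g
      intro r hqr hforce
      show σ.restrict r ∈ (((s 0).restrict q).restrict r).elems r
      rw [hs0, elems_restrict _ (le_refl r), elems_restrict _ hqr,
        hchar r (hpq.trans hqr)]
      refine ⟨restrict_mem_Vp hσ r, fun u hru x hx => ?_⟩
      rw [elems_restrict _ hru] at hx
      have hxvp : x ∈ Vp u := by
        obtain ⟨b, hbg, hbb, hbσ⟩ := hσ
        refine mem_elems_vp hbg (y := x) ?_
        rw [hbσ]
        exact hx
      have hprem : x.restrict u ∈ (((σ.restrict r).restrict u).restrict u).elems u := by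
        rw [elems_restrict _ (le_refl u), elems_restrict _ (le_refl u),
          elems_restrict _ hru, vp_restrict_self hxvp]
        exact hx
      have hconc := hforce u hru x hxvp u (le_refl u) hprem
      have hconc' : x.restrict u ∈
          ((((((s 1).restrict q).restrict r).restrict u).restrict u)).elems u := hconc
      rw [hs1, elems_restrict _ (le_refl u), elems_restrict _ (le_refl u),
        elems_restrict _ hru, elems_restrict _ (hqr.trans hru),
        vp_restrict_self hxvp] at hconc'
      exact hconc'

end PowAux

/-- **The axiom of power set is forced.**  For every `p`:
`⊩ₚ ∀x∃y∀z(z ∈ y ↔ ∀w(w ∈ z → w ∈ x))`.  Explicitly, for `f ∈ V(p)` the variable set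
`g` whose value `g(q)` consists of all variable sets `h ∈ V(q)` with `h(r) ⊆ f(r)` for
all `r ≥ q` belongs to `V(p)` and satisfies `⊩ₚ ∀z(z ∈ g ↔ ∀w(w ∈ z → w ∈ f))`. -/
theorem powerset_forced {P : Type} [PartialOrder P] (p : P) :
    Forces p SetFml.powAx ![] ∧
    (∀ f ∈ Vp p,
      ∃ g ∈ Vp p,
        (∀ q : P, p ≤ q → VSet.elems g q =
          {h : VSet P | h ∈ Vp q ∧ ∀ r : P, q ≤ r → VSet.elems h r ⊆ VSet.elems f r}) ∧
        Forces p (.all (.iff (.mem 0 1) (.all (.imp (.mem 0 1) (.mem 0 3))))) ![g, f]) := by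
  constructor
  · intro q hpq f hf
    obtain ⟨g, hg, hchar, hforce⟩ := PowAux.main q f hf
    exact ⟨g, hg, hforce _ rfl rfl⟩
  · intro f hf
    obtain ⟨g, hg, hchar, hforce⟩ := PowAux.main p f hf
    exact ⟨g, hg, hchar, hforce ![g, f] rfl rfl⟩

end
end

section
/- (ℕ̂(p) is forced to be the minimum inductive set) Let (ℙ,≤) be a partial order with the hereditary-subsets topology. For every p ∈ ℙ: ⊩_p ∀S ((∅̂(p) ∈ S ∧ ∀x(x ∈ S → Suc(x) ∈ S)) → ℕ̂(p) ⊆ S), where ℕ̂(p) ⊆ S abbreviates ∀x(x ∈ ℕ̂(p) → x ∈ S). Moreover ℕ̂(p) is itself forced at p to be inductive: ⊩_p (∅̂(p) ∈ ℕ̂(p)) ∧ ∀x(x ∈ ℕ̂(p) → Suc(x) ∈ ℕ̂(p)). -/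
set_option linter.unusedVariables false

noncomputable section

/-! ### Auxiliary lemmas -/

namespace ForcingAux

open VSet VName

set_option linter.unusedSectionVars false

variable {P : Type} [Preorder P]

theorem hatN_base : ∀ (a : PSet) (q : P), (VSet.hatN a q).base = q
  | ⟨_, _⟩, _ => rfl

theorem hatN_restrict : ∀ (a : PSet) {q r : P}, q ≤ r →
    VName.Equiv ((VSet.hatN a q).restrictN r) (VSet.hatN a r)
  | ⟨α, A⟩, q, r, h =>
      ⟨rfl, fun s =>
        ⟨fun i => ⟨⟨i.1.1, i.2⟩, VName.Equiv.refl _⟩,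
         fun j => ⟨⟨⟨j.1, PLift.up (h.trans j.2.down)⟩, j.2⟩, VName.Equiv.refl _⟩⟩⟩

theorem hatN_congr : ∀ {a b : PSet}, PSet.Equiv a b → ∀ q : P,
    VName.Equiv (VSet.hatN a q) (VSet.hatN b q)
  | ⟨α, A⟩, ⟨β, B⟩, ⟨h1, h2⟩, q =>
      ⟨rfl, fun s =>
        ⟨fun i => let ⟨j, hj⟩ := h1 i.1; ⟨⟨j, i.2⟩, hatN_congr hj s⟩,
         fun j => let ⟨i, hi⟩ := h2 j.1; ⟨⟨i, j.2⟩, hatN_congr hi s⟩⟩⟩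

theorem hatN_good : ∀ (a : PSet) (q : P), VName.GoodN (VSet.hatN a q)
  | ⟨α, A⟩, q =>
      ⟨fun s hs => hs.some.2.down,
       fun s i => ⟨hatN_base (A i.1) s, hatN_good (A i.1) s⟩,
       fun s i r hsr => ⟨⟨i.1, PLift.up (i.2.down.trans hsr)⟩, hatN_restrict (A i.1) hsr⟩⟩

theorem sucN_congr : ∀ {a b : VName P}, VName.Equiv a b →
    VName.Equiv (VSet.sucN a) (VSet.sucN b) := by
  rintro ⟨p, ι, el⟩ ⟨p', ι', el'⟩ ⟨hp, hh⟩
  subst hp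
  have hab : VName.Equiv (VName.mk p ι el) (VName.mk p ι' el') := ⟨rfl, hh⟩
  refine ⟨rfl, fun q => ⟨fun i => ?_, fun j => ?_⟩⟩
  · rcases i with i | h
    · obtain ⟨j, hj⟩ := (hh q).1 i
      exact ⟨Sum.inl j, hj⟩
    · exact ⟨Sum.inr h, VSet.restrictN_congr q hab⟩
  · rcases j with j | h
    · obtain ⟨i, hi⟩ := (hh q).2 j
      exact ⟨Sum.inl i, hi⟩
    · exact ⟨Sum.inr h, VSet.restrictN_congr q hab⟩

theorem sucN_hatN : ∀ (a : PSet) (q : P),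
    VName.Equiv (VSet.sucN (VSet.hatN a q)) (VSet.hatN (insert a a) q)
  | ⟨α, A⟩, q =>
      ⟨rfl, fun s =>
        ⟨fun i => match i with
          | .inl x => ⟨⟨some x.1, x.2⟩, VName.Equiv.refl _⟩
          | .inr h => ⟨⟨none, h⟩, hatN_restrict ⟨α, A⟩ h.down⟩,
         fun j => match j with
          | ⟨some x, h⟩ => ⟨.inl ⟨x, h⟩, VName.Equiv.refl _⟩
          | ⟨none, h⟩ => ⟨.inr h, hatN_restrict ⟨α, A⟩ h.down⟩⟩⟩

theorem out_equiv {a : VName P} {f : VSet P} (h : (⟦a⟧ : VSet P) = f) :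
    VName.Equiv f.out a := by
  subst h; exact @Quotient.mk_out (VName P) (VName.setoid P) a

theorem restrict_mk (a : VName P) (r : P) :
    VSet.restrict (⟦a⟧ : VSet P) r = ⟦a.restrictN r⟧ := rfl

/-- Membership in the value of a good variable set is preserved by restriction. -/
theorem mem_elems_restrict {q : P} {S : VSet P} (hS : S ∈ Vp q) {u w : P} (huw : u ≤ w)
    {c : VName P} (h : (⟦c⟧ : VSet P) ∈ S.elems u) :
    (⟦c.restrictN w⟧ : VSet P) ∈ S.elems w := by
  obtain ⟨a, ha, -, rfl⟩ := hS
  obtain ⟨p', ι, el⟩ := a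
  obtain ⟨-, -, h3⟩ := ha
  obtain ⟨i, hi⟩ := h
  obtain ⟨j, hj⟩ := h3 u i w huw
  refine ⟨j, ?_⟩
  have h0 : VName.Equiv c (el u i) := by
    exact VName.Equiv.symm (Quotient.exact hi)
  have h1 : VName.Equiv (c.restrictN w) ((el u i).restrictN w) :=
    VSet.restrictN_congr w h0
  show (⟦el w j⟧ : VSet P) = ⟦c.restrictN w⟧
  exact (Quotient.sound (VName.Equiv.trans h1 hj)).symm

theorem mem_hatN_elems {a b : PSet} (hb : ∃ i, PSet.Equiv (a.Func i) b) {p u : P}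
    (hpu : p ≤ u) : (⟦VSet.hatN b u⟧ : VSet P) ∈ VSet.elemsN (VSet.hatN a p) u := by
  obtain ⟨α, A⟩ := a
  obtain ⟨i, hi⟩ := hb
  refine ⟨⟨i, PLift.up hpu⟩, ?_⟩
  show (⟦VSet.hatN (A i) u⟧ : VSet P) = ⟦VSet.hatN b u⟧
  exact Quotient.sound (hatN_congr hi u)

theorem mem_hatN_elems_inv {a : PSet} {p u : P} {y : VSet P}
    (h : y ∈ VSet.elemsN (VSet.hatN a p) u) :
    p ≤ u ∧ ∃ i, y = ⟦VSet.hatN (a.Func i) u⟧ := by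
  obtain ⟨α, A⟩ := a
  obtain ⟨i, rfl⟩ := h
  exact ⟨i.2.down, i.1, rfl⟩

theorem omega_out_equiv : PSet.Equiv (ZFSet.omega.out : PSet.{0}) (PSet.omega : PSet.{0}) := by
  exact ZFSet.eq.mp (ZFSet.mk_out ZFSet.omega)

theorem empty_hat (r : P) :
    (⟦VSet.hatN (PSet.ofNat 0) r⟧ : VSet P) = VSet.hatV (∅ : ZFSet) r := by
  have h : PSet.Equiv (PSet.ofNat 0) ((∅ : ZFSet).out) := by
    exact PSet.Equiv.symm (ZFSet.eq.mp (ZFSet.mk_out (∅ : ZFSet)))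
  exact Quotient.sound (hatN_congr h r)

theorem restrict_hat_self {a : PSet} {u : P} :
    VSet.restrict (⟦VSet.hatN a u⟧ : VSet P) u = ⟦VSet.hatN a u⟧ := by
  exact Quotient.sound (hatN_restrict a le_rfl)

theorem sucV_hat {a : PSet} {u : P} :
    VSet.sucV (⟦VSet.hatN a u⟧ : VSet P) = ⟦VSet.hatN (insert a a) u⟧ := by
  have h : VName.Equiv (Quotient.out (⟦VSet.hatN a u⟧ : VSet P)) (VSet.hatN a u) := by
    exact @Quotient.mk_out (VName P) (VName.setoid P) (VSet.hatN a u)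
  exact Quotient.sound (VName.Equiv.trans (sucN_congr h) (sucN_hatN a u))

theorem key {q : P} {S : VSet P} (hS : S ∈ Vp q) {r : P}
    (h0 : VSet.hatV (∅ : ZFSet) r ∈ S.elems r)
    (hsuc : ∀ t : P, r ≤ t → ∀ x ∈ Vp t, ∀ u : P, t ≤ u →
      (x.restrict u ∈ VSet.elems S u → VSet.sucV (x.restrict u) ∈ VSet.elems S u))
    (n : ℕ) : ∀ u : P, r ≤ u → (⟦VSet.hatN (PSet.ofNat n) u⟧ : VSet P) ∈ S.elems u := by
  induction n with
  | zero =>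
    intro u hru
    have h0' : (⟦VSet.hatN (PSet.ofNat 0) r⟧ : VSet P) ∈ S.elems r := by
      rw [empty_hat]; exact h0
    have := mem_elems_restrict hS hru h0'
    have heq : (⟦(VSet.hatN (PSet.ofNat 0) r).restrictN u⟧ : VSet P) =
        ⟦VSet.hatN (PSet.ofNat 0) u⟧ := Quotient.sound (hatN_restrict _ hru)
    rwa [heq] at this
  | succ n ih =>
    intro u hru
    have hx := ih u hru
    have hxV : (⟦VSet.hatN (PSet.ofNat n) u⟧ : VSet P) ∈ Vp u :=
      ⟨_, hatN_good _ _, hatN_base _ _, rfl⟩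
    have := hsuc u hru _ hxV u le_rfl (by rw [restrict_hat_self]; exact hx)
    rw [restrict_hat_self, sucV_hat] at this
    exact this

end ForcingAux

/-- **`ℕ̂(p)` is forced to be the minimum inductive set.**  First part:
`⊩ₚ ∀S((∅̂ ∈ S ∧ ∀x(x ∈ S → Suc(x) ∈ S)) → ℕ̂ ⊆ S)`, with the forcing clauses for
`∀`, `→` unfolded over the topology of hereditary subsets.  Second part: `ℕ̂(p)` is
itself forced at `p` to be inductive. -/
theorem nat_hat_minimum_inductive {P : Type} [PartialOrder P] (p : P) :
    (∀ q : P, p ≤ q → ∀ S ∈ Vp q, ∀ r : P, q ≤ r →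
      ((VSet.hatV (∅ : ZFSet) r ∈ VSet.elems S r ∧
          ∀ t : P, r ≤ t → ∀ x ∈ Vp t, ∀ u : P, t ≤ u →
            (x.restrict u ∈ VSet.elems S u →
              VSet.sucV (x.restrict u) ∈ VSet.elems S u)) →
        ∀ t : P, r ≤ t → ∀ x ∈ Vp t, ∀ u : P, t ≤ u →
          (x.restrict u ∈ VSet.elems (VSet.hatV ZFSet.omega p) u →
            x.restrict u ∈ VSet.elems S u))) ∧
    (VSet.hatV (∅ : ZFSet) p ∈ VSet.elems (VSet.hatV ZFSet.omega p) p ∧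
      ∀ t : P, p ≤ t → ∀ x ∈ Vp t, ∀ u : P, t ≤ u →
        (x.restrict u ∈ VSet.elems (VSet.hatV ZFSet.omega p) u →
          VSet.sucV (x.restrict u) ∈ VSet.elems (VSet.hatV ZFSet.omega p) u)) := by

  constructor
  · intro q hpq S hS r hqr h t hrt x hx u htu hmem
    obtain ⟨h0, hsuc⟩ := h
    obtain ⟨hpu, i, hy⟩ := ForcingAux.mem_hatN_elems_inv hmem
    obtain ⟨m, hm⟩ := ForcingAux.omega_out_equiv.exists_left i
    have hy' : x.restrict u = ⟦VSet.hatN (PSet.ofNat m.down) u⟧ := by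
      rw [hy]; exact Quotient.sound (ForcingAux.hatN_congr hm u)
    rw [hy']
    exact ForcingAux.key hS h0 hsuc m.down u (hrt.trans htu)
  · constructor
    · have h1 : VSet.hatV (∅ : ZFSet) p = ⟦VSet.hatN (PSet.ofNat 0) p⟧ :=
        (ForcingAux.empty_hat p).symm
      rw [h1]
      exact ForcingAux.mem_hatN_elems
        (ForcingAux.omega_out_equiv.exists_right (ULift.up 0)) le_rfl
    · intro t hpt x hx u htu hmem
      obtain ⟨hpu, i, hy⟩ := ForcingAux.mem_hatN_elems_inv hmem
      obtain ⟨m, hm⟩ := ForcingAux.omega_out_equiv.exists_left i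
      have hy' : x.restrict u = ⟦VSet.hatN (PSet.ofNat m.down) u⟧ := by
        rw [hy]; exact Quotient.sound (ForcingAux.hatN_congr hm u)
      rw [hy', ForcingAux.sucV_hat]
      exact ForcingAux.mem_hatN_elems
        (ForcingAux.omega_out_equiv.exists_right (ULift.up (m.down + 1))) hpu

end
end

section
/- (Axiom of Foundation, ¬¬ form, is forced) Let (ℙ,≤) be a partial order with the hereditary-subsets topology. For every p ∈ ℙ: ⊩_p ¬∃x ¬(∃y(y ∈ x) → ∃y(y ∈ x ∧ ¬∃z(z ∈ x ∧ z ∈ y))). -/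
set_option linter.unusedVariables false

noncomputable section

/-! ### Auxiliary development for the foundation axiom -/

namespace VName

/-- Ordinal rank of a name. -/
def rankN {P : Type} : VName P → Ordinal.{0}
  | .mk _ ι el => ⨆ x : (q : P) × ι q, Order.succ (rankN (el x.1 x.2))

theorem lt_rankN {P : Type} {p : P} {ι : P → Type} {el : ∀ q : P, ι q → VName P}
    (q : P) (i : ι q) : rankN (el q i) < rankN (.mk p ι el) :=
  lt_of_lt_of_le (Order.lt_succ _)
    (Ordinal.le_iSup (fun x : (q : P) × ι q => Order.succ (rankN (el x.1 x.2))) ⟨q, i⟩)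

theorem rankN_congr {P : Type} : ∀ {a b : VName P}, VName.Equiv a b → rankN a = rankN b
  | .mk _ ι el, .mk _ ι' el', ⟨_, h⟩ => by
    refine le_antisymm (Ordinal.iSup_le ?_) (Ordinal.iSup_le ?_)
    · rintro ⟨q, i⟩
      obtain ⟨j, hj⟩ := (h q).1 i
      rw [rankN_congr hj]
      exact Ordinal.le_iSup (fun x : (q : P) × ι' q => Order.succ (rankN (el' x.1 x.2))) ⟨q, j⟩
    · rintro ⟨q, j⟩
      obtain ⟨i, hi⟩ := (h q).2 j
      rw [← rankN_congr hi]
      exact Ordinal.le_iSup (fun x : (q : P) × ι q => Order.succ (rankN (el x.1 x.2))) ⟨q, i⟩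

theorem rankN_restrict_le {P : Type} [Preorder P] :
    ∀ (a : VName P) (r : P), rankN (a.restrictN r) ≤ rankN a
  | .mk p ι el, r => Ordinal.iSup_le fun x =>
      Ordinal.le_iSup (fun x : (q : P) × ι q => Order.succ (rankN (el x.1 x.2))) ⟨x.1, x.2.1⟩

end VName

namespace VSet

variable {P : Type}

/-- Ordinal rank of a variable set. -/
def rankV : VSet P → Ordinal.{0} :=
  Quotient.lift VName.rankN fun _ _ h => VName.rankN_congr h

theorem rankV_restrict_le [Preorder P] (w : VSet P) (r : P) :
    rankV (w.restrict r) ≤ rankV w :=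
  Quotient.inductionOn w fun a => VName.rankN_restrict_le a r

theorem rankV_lt_of_mem {w z : VSet P} {u : P} (h : z ∈ w.elems u) : rankV z < rankV w := by
  induction w using Quotient.inductionOn with
  | h a =>
    cases a with
    | mk p ι el =>
      obtain ⟨i, rfl⟩ := h
      exact VName.lt_rankN (p := p) u i

theorem rankV_lt_of_mem_restrict [Preorder P] {w z : VSet P} {u : P}
    (h : z ∈ (w.restrict u).elems u) : rankV z < rankV w :=
  lt_of_lt_of_le (rankV_lt_of_mem h) (rankV_restrict_le w u)

theorem elems_restrict [Preorder P] (w : VSet P) {r u : P} (h : r ≤ u) :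
    (w.restrict r).elems u = w.elems u := by
  induction w using Quotient.inductionOn with
  | h a =>
    cases a with
    | mk p ι el =>
      ext x
      constructor
      · rintro ⟨i, rfl⟩
        exact ⟨i.1, rfl⟩
      · rintro ⟨i, rfl⟩
        exact ⟨⟨i, ⟨h⟩⟩, rfl⟩

end VSet

section Found

variable {P : Type} [Preorder P]

theorem mem_elems_mono {a : VName P} (ha : a.GoodN) {t u : P} (h : t ≤ u)
    {y : VSet P} (hy : y ∈ VSet.elems ⟦a⟧ t) : y.restrict u ∈ VSet.elems ⟦a⟧ u := by
  cases a with
  | mk p ι el =>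
    obtain ⟨i, rfl⟩ := hy
    obtain ⟨-, -, h3⟩ := ha
    obtain ⟨j, hj⟩ := h3 t i u h
    exact ⟨j, (Quotient.sound hj).symm⟩

theorem mem_Vp_of_mem_elems {a : VName P} (ha : a.GoodN) {t : P}
    {y : VSet P} (hy : y ∈ VSet.elems ⟦a⟧ t) : y ∈ Vp t := by
  cases a with
  | mk p ι el =>
    obtain ⟨i, rfl⟩ := hy
    obtain ⟨-, h2, -⟩ := ha
    exact ⟨el t i, (h2 t i).2, (h2 t i).1, rfl⟩

/-- At every `t ≥ r`, if `a` has an element at `t`, then it has a "minimal" element at `t`. -/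
def GoodAt (a : VName P) (r : P) : Prop :=
  ∀ t, r ≤ t → ∀ y ∈ Vp t, y ∈ VSet.elems ⟦a⟧ t →
    ∃ y' ∈ Vp t, y' ∈ VSet.elems ⟦a⟧ t ∧
      ∀ u, t ≤ u → ∀ z ∈ Vp u,
        ¬(z ∈ VSet.elems ⟦a⟧ u ∧ z ∈ (y'.restrict u).elems u)

theorem descend (a : VName P) (ha : a.GoodN) (α : Ordinal) :
    ∀ t : P, ∀ y : VSet P, VSet.rankV y = α → y ∈ VSet.elems ⟦a⟧ t →
      ∃ r, t ≤ r ∧ GoodAt a r := by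
  induction α using Ordinal.induction with
  | h α IH =>
    intro t y hrk hy
    by_cases hg : GoodAt a t
    · exact ⟨t, le_rfl, hg⟩
    · unfold GoodAt at hg
      push_neg at hg
      obtain ⟨t', htt', y₀, hy₀Vp, hy₀mem, hfail⟩ := hg
      have hymem : y.restrict t' ∈ VSet.elems ⟦a⟧ t' := mem_elems_mono ha htt' hy
      obtain ⟨u, ht'u, z, hzVp, hzel, hzmem⟩ :=
        hfail (y.restrict t') (mem_Vp_of_mem_elems ha hymem) hymem
      have hlt : VSet.rankV z < α := by
        calc VSet.rankV z < VSet.rankV (y.restrict t') := VSet.rankV_lt_of_mem_restrict hzmem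
        _ ≤ VSet.rankV y := VSet.rankV_restrict_le y t'
        _ = α := hrk
      obtain ⟨r, hur, hr⟩ := IH _ hlt u z rfl hzel
      exact ⟨r, le_trans htt' (le_trans ht'u hur), hr⟩

end Found

/-- **The axiom of foundation (in its `¬¬` form) is forced:**
`⊩ₚ ¬∃x¬(∃y(y ∈ x) → ∃y(y ∈ x ∧ ¬∃z(z ∈ x ∧ z ∈ y)))` for every `p`. -/
theorem foundation_forced {P : Type} [PartialOrder P] (p : P) :
    Forces p SetFml.foundAx ![] := by
  have c1 : ∀ {α : Type 1} (x : α) (f : Fin 1 → α), (Fin.cons x f : Fin 2 → α) 1 = f 0 := fun _ _ => rfl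
  have c2 : ∀ {α : Type 1} (x : α) (f : Fin 2 → α), (Fin.cons x f : Fin 3 → α) 2 = f 1 := fun _ _ => rfl
  unfold SetFml.foundAx
  intro q hpq hEx
  obtain ⟨σ, hσ, hnot⟩ := hEx
  obtain ⟨a, haG, haB, rfl⟩ := hσ
  simp only [Forces, Fin.cons_zero, c1, c2] at hnot
  -- obtain a node `r ≥ q` above which `a` has "minimal" elements everywhere
  have hR : ∃ r, q ≤ r ∧ GoodAt a r := by
    by_cases hne : ∃ t, q ≤ t ∧ ∃ y, y ∈ VSet.elems ⟦a⟧ t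
    · obtain ⟨t, hqt, y, hy⟩ := hne
      obtain ⟨r, htr, hr⟩ := descend a haG (VSet.rankV y) t y rfl hy
      exact ⟨r, le_trans hqt htr, hr⟩
    · refine ⟨q, le_rfl, fun t hqt y _ hy => absurd ⟨t, hqt, y, hy⟩ hne⟩
  obtain ⟨r, hqr, hGood⟩ := hR
  refine hnot r hqr (fun t hrt hant => ?_)
  have hqt : q ≤ t := le_trans hqr hrt
  obtain ⟨y, hyVp, hymem⟩ := hant
  rw [VSet.elems_restrict _ (le_refl t), VSet.elems_restrict _ hrt] at hymem
  obtain ⟨y', hy'Vp, hy'mem, hy'min⟩ := hGood t hrt y hyVp hymem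
  refine ⟨y', hy'Vp, ?_, ?_⟩
  · rw [VSet.elems_restrict _ (le_refl t), VSet.elems_restrict _ hrt]
    exact hy'mem
  · intro u htu hz
    obtain ⟨z, hzVp, hz1, hz2⟩ := hz
    rw [VSet.elems_restrict _ (le_refl u), VSet.elems_restrict _ htu,
      VSet.elems_restrict _ (le_trans hrt htu)] at hz1
    exact hy'min u htu z hzVp ⟨hz1, hz2⟩

end
end
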